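/- For every ρ > 0, A > 0 and ε > 0 there exists N ∈ ℕ such that for all integers n ≥ N and all real a ∈ (0, A]: ∑_{k=1}^∞ k^ρ (1 − e^{−na})^{k−1} ≤ e^{n(1+ρ)(a+ε)}. (This is Lemma 1 of the paper, stated with convergence uniform over a in a bounded range.) -/
import Mathlib

lemma rpow_le_rpow_mul_exp (ρ s : ℝ) (hρ : 0 < ρ) (hs : 0 < s) :
    s ^ ρ ≤ ρ ^ ρ * Real.exp s := by
  rw [Real.rpow_def_of_pos hs, Real.rpow_def_of_pos hρ, ← Real.exp_add]
  apply Real.exp_le_exp.mpr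
  have h2 : Real.log s - Real.log ρ ≤ s / ρ - 1 := by
    rw [← Real.log_div (ne_of_gt hs) (ne_of_gt hρ)]
    exact Real.log_le_sub_one_of_pos (by positivity)
  have h3 : (s / ρ) * ρ = s := div_mul_cancel₀ s (ne_of_gt hρ)
  nlinarith [mul_le_mul_of_nonneg_right h2 hρ.le]

theorem universal_geometric_moment_bound (ρ A ε : ℝ) (hρ : 0 < ρ) (hA : 0 < A) (hε : 0 < ε) :
    ∃ N : ℕ, ∀ n : ℕ, N ≤ n → ∀ a : ℝ, 0 < a → a ≤ A →
      ∑' k : ℕ, ((k : ℝ) + 1) ^ ρ * (1 - Real.exp (-(n : ℝ) * a)) ^ k ≤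
        Real.exp ((n : ℝ) * (1 + ρ) * (a + ε)) := by
  set C : ℝ := 2 ^ (1 + ρ) * ρ ^ ρ * Real.exp 1 with hCdef
  have hC0 : 0 < C := by positivity
  refine ⟨⌈Real.log C / ((1 + ρ) * ε)⌉₊, ?_⟩
  intro n hn a ha haA
  -- first: C ≤ exp (n * (1+ρ) * ε)
  have hden : 0 < (1 + ρ) * ε := by positivity
  have hNn : Real.log C / ((1 + ρ) * ε) ≤ (n : ℝ) := by
    calc Real.log C / ((1 + ρ) * ε) ≤ (⌈Real.log C / ((1 + ρ) * ε)⌉₊ : ℝ) := Nat.le_ceil _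
    _ ≤ (n : ℝ) := by exact_mod_cast hn
  have hClog : Real.log C ≤ (n : ℝ) * ((1 + ρ) * ε) := by
    rw [div_le_iff₀ hden] at hNn; linarith
  have hCexp : C ≤ Real.exp ((n : ℝ) * (1 + ρ) * ε) := by
    calc C = Real.exp (Real.log C) := (Real.exp_log hC0).symm
    _ ≤ Real.exp ((n : ℝ) * (1 + ρ) * ε) := by
        apply Real.exp_le_exp.mpr; rw [mul_assoc]; exact hClog
  set q : ℝ := Real.exp (-(n : ℝ) * a) with hqdef
  have hq0 : 0 < q := Real.exp_pos _
  have hq1 : q ≤ 1 := by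
    rw [hqdef]
    apply Real.exp_le_one_iff.mpr
    have : (0:ℝ) ≤ (n : ℝ) * a := by positivity
    linarith
  set x : ℝ := 1 - q with hxdef
  have hx0 : 0 ≤ x := by simp [hxdef]; linarith
  set r : ℝ := x * Real.exp (q / 2) with hrdef
  have hr0 : 0 ≤ r := by positivity
  have he1 : Real.exp (q / 2) * (1 - q / 2) ≤ 1 := by
    have h := Real.add_one_le_exp (-(q / 2))
    have hmul : Real.exp (q / 2) * Real.exp (-(q / 2)) = 1 := by
      rw [← Real.exp_add]; simp
    nlinarith [Real.exp_pos (q / 2)]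
  have hr1 : r ≤ 1 - q / 2 := by
    rw [hrdef, hxdef]
    nlinarith [Real.exp_pos (q / 2), he1, sq_nonneg q]
  have hrlt : r < 1 := lt_of_le_of_lt hr1 (by linarith)
  set D : ℝ := ρ ^ ρ * (2 / q) ^ ρ * Real.exp (q / 2) with hDdef
  have hD0 : 0 < D := by positivity
  -- pointwise bound
  have hpt : ∀ k : ℕ, ((k : ℝ) + 1) ^ ρ * x ^ k ≤ D * r ^ k := by
    intro k
    have hs : (0 : ℝ) < ((k : ℝ) + 1) * (q / 2) := by positivity
    have h1 := rpow_le_rpow_mul_exp ρ _ hρ hs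
    have h2 : (((k : ℝ) + 1) * (q / 2)) ^ ρ = ((k : ℝ) + 1) ^ ρ * (q / 2) ^ ρ :=
      Real.mul_rpow (by positivity) (by positivity)
    have h3 : Real.exp (((k : ℝ) + 1) * (q / 2)) = Real.exp (q / 2) * Real.exp (q / 2) ^ k := by
      rw [← Real.exp_nat_mul, ← Real.exp_add]; ring_nf
    have hinv : (q / 2) ^ ρ * (2 / q) ^ ρ = 1 := by
      rw [← Real.mul_rpow (by positivity) (by positivity)]
      rw [show q / 2 * (2 / q) = 1 by field_simp]
      exact Real.one_rpow ρ
    have h4 : ((k : ℝ) + 1) ^ ρ ≤ ρ ^ ρ * (2 / q) ^ ρ * (Real.exp (q / 2) * Real.exp (q / 2) ^ k) := by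
      have := mul_le_mul_of_nonneg_right (h2 ▸ h1) (le_of_lt (Real.rpow_pos_of_pos (by positivity : (0:ℝ) < 2 / q) ρ))
      calc ((k : ℝ) + 1) ^ ρ
          = ((k : ℝ) + 1) ^ ρ * ((q / 2) ^ ρ * (2 / q) ^ ρ) := by rw [hinv, mul_one]
        _ = ((k : ℝ) + 1) ^ ρ * (q / 2) ^ ρ * (2 / q) ^ ρ := by ring
        _ ≤ ρ ^ ρ * Real.exp (((k : ℝ) + 1) * (q / 2)) * (2 / q) ^ ρ := this
        _ = ρ ^ ρ * (2 / q) ^ ρ * (Real.exp (q / 2) * Real.exp (q / 2) ^ k) := by rw [h3]; ring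
    calc ((k : ℝ) + 1) ^ ρ * x ^ k
        ≤ (ρ ^ ρ * (2 / q) ^ ρ * (Real.exp (q / 2) * Real.exp (q / 2) ^ k)) * x ^ k :=
          mul_le_mul_of_nonneg_right h4 (pow_nonneg hx0 k)
      _ = D * r ^ k := by rw [hDdef, hrdef, mul_pow]; ring
  have hsumg : Summable (fun k : ℕ => D * r ^ k) :=
    (summable_geometric_of_lt_one hr0 hrlt).mul_left D
  have hsumf : Summable (fun k : ℕ => ((k : ℝ) + 1) ^ ρ * x ^ k) := by
    apply Summable.of_nonneg_of_le (fun k => by positivity) hpt hsumg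
  have hstep1 : ∑' k : ℕ, ((k : ℝ) + 1) ^ ρ * x ^ k ≤ D * (1 - r)⁻¹ := by
    calc ∑' k : ℕ, ((k : ℝ) + 1) ^ ρ * x ^ k ≤ ∑' k : ℕ, D * r ^ k :=
        Summable.tsum_le_tsum hpt hsumf hsumg
    _ = D * (1 - r)⁻¹ := by rw [tsum_mul_left, tsum_geometric_of_lt_one hr0 hrlt]
  have hinvr : (1 - r)⁻¹ ≤ 2 / q := by
    have h1 : q / 2 ≤ 1 - r := by linarith
    calc (1 - r)⁻¹ ≤ (q / 2)⁻¹ := by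
          apply inv_anti₀ (by positivity) h1
      _ = 2 / q := by rw [inv_div]
  have hstep2 : D * (1 - r)⁻¹ ≤ D * (2 / q) :=
    mul_le_mul_of_nonneg_left hinvr hD0.le
  -- compute D * (2/q) ≤ C * exp (n * a * (1+ρ))
  have hqpow : (2 / q) ^ (1 + ρ) = 2 ^ (1 + ρ) * Real.exp ((n : ℝ) * a * (1 + ρ)) := by
    rw [Real.div_rpow (by norm_num) hq0.le, hqdef, ← Real.exp_mul, div_eq_mul_inv,
      ← Real.exp_neg]
    ring_nf
  have hDq : D * (2 / q) = 2 ^ (1 + ρ) * ρ ^ ρ * Real.exp (q / 2) *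
      Real.exp ((n : ℝ) * a * (1 + ρ)) := by
    have h2q : (2 / q) ≠ 0 := by positivity
    have : (2 / q) ^ ρ * (2 / q) = (2 / q) ^ (1 + ρ) := by
      rw [add_comm, Real.rpow_add_one h2q]
    calc D * (2 / q) = ρ ^ ρ * Real.exp (q / 2) * ((2 / q) ^ ρ * (2 / q)) := by
          rw [hDdef]; ring
      _ = ρ ^ ρ * Real.exp (q / 2) * (2 ^ (1 + ρ) * Real.exp ((n : ℝ) * a * (1 + ρ))) := by
          rw [this, hqpow]
      _ = _ := by ring
  have hfinal : D * (2 / q) ≤ Real.exp ((n : ℝ) * (1 + ρ) * (a + ε)) := by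
    rw [hDq]
    have hexpq : Real.exp (q / 2) ≤ Real.exp 1 := Real.exp_le_exp.mpr (by linarith)
    have h5 : 2 ^ (1 + ρ) * ρ ^ ρ * Real.exp (q / 2) ≤ C := by
      rw [hCdef]
      apply mul_le_mul_of_nonneg_left hexpq (by positivity)
    calc 2 ^ (1 + ρ) * ρ ^ ρ * Real.exp (q / 2) * Real.exp ((n : ℝ) * a * (1 + ρ))
        ≤ C * Real.exp ((n : ℝ) * a * (1 + ρ)) :=
          mul_le_mul_of_nonneg_right h5 (Real.exp_pos _).le
      _ ≤ Real.exp ((n : ℝ) * (1 + ρ) * ε) * Real.exp ((n : ℝ) * a * (1 + ρ)) :=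
          mul_le_mul_of_nonneg_right hCexp (Real.exp_pos _).le
      _ = Real.exp ((n : ℝ) * (1 + ρ) * (a + ε)) := by
          rw [← Real.exp_add]; ring_nf
  calc ∑' k : ℕ, ((k : ℝ) + 1) ^ ρ * x ^ k ≤ D * (1 - r)⁻¹ := hstep1
    _ ≤ D * (2 / q) := hstep2
    _ ≤ Real.exp ((n : ℝ) * (1 + ρ) * (a + ε)) := hfinal
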